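/- Every cubic ring over ℤ has a good basis: if T is a commutative unital ring whose underlying additive group is free of rank 3 over ℤ, then there exist elements ω, θ ∈ T such that (1, ω, θ) is a ℤ-basis of T and ωθ ∈ ℤ·1. -/

import Mathlib

set_option autoImplicit false

/-!
Every cubic ring over `ℤ` (a commutative unital ring whose additive group is free of
rank 3 over `ℤ`) has a good basis: a `ℤ`-basis of the form `(1, ω, θ)` with
`ωθ ∈ ℤ·1`.
-/

/-- If `u • v = 1` in a ring with a `ℤ`-basis, then `u` is a unit of `ℤ`. -/
lemma aux_isUnit_of_smul_eq_one (T : Type*) [CommRing T] (b : Module.Basis (Fin 3) ℤ T)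
    (u : ℤ) (v : T) (h : u • v = 1) : IsUnit u := by
  classical
  let L : T →ₗ[ℤ] T := LinearMap.mulLeft ℤ v
  have key : u • L = LinearMap.id := by
    ext x
    simp only [LinearMap.smul_apply, LinearMap.id_apply]
    show u • (v * x) = x
    rw [← smul_mul_assoc, h, one_mul]
  have h2 : (LinearMap.toMatrix b b (u • L)).det = 1 := by
    rw [key, LinearMap.toMatrix_id, Matrix.det_one]
  rw [map_smul, Matrix.det_smul, Fintype.card_fin] at h2
  exact IsUnit.of_mul_eq_one (a := u) (u ^ 2 * (LinearMap.toMatrix b b L).det) (by ring_nf; linarith [h2])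

theorem cubic_ring_has_good_basis (T : Type*) [CommRing T] (b : Module.Basis (Fin 3) ℤ T) :
    ∃ (b' : Module.Basis (Fin 3) ℤ T) (n : ℤ), b' 0 = 1 ∧ b' 1 * b' 2 = (n : T) := by
  classical
  haveI : Nontrivial T := Equiv.nontrivial b.repr.toEquiv
  haveI : Module.Free ℤ T := Module.Free.of_basis b
  have hone : (1 : T) ≠ 0 := one_ne_zero
  -- Step 1: find a basis `d` with `d 0 = 1`, via Smith normal form for `span {1}`.
  set N : Submodule ℤ T := Submodule.span ℤ {1} with hN
  obtain ⟨n, snf⟩ := N.smithNormalForm b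
  -- `n = 1` since `N ≅ ℤ`
  have hinj : Function.Injective (LinearMap.toSpanSingleton ℤ T 1) := by
    intro x y hxy
    simp only [LinearMap.toSpanSingleton_apply] at hxy
    have : (x - y) • (1 : T) = 0 := by rw [sub_smul, hxy, sub_self]
    rcases smul_eq_zero.mp this with h | h
    · linarith [h]
    · exact absurd h hone
  have hNe : (ℤ) ≃ₗ[ℤ] N :=
    (LinearEquiv.ofInjective _ hinj).trans
      (LinearEquiv.ofEq _ _ (LinearMap.span_singleton_eq_range ℤ T 1).symm)
  have hn1 : n = 1 := by
    have h1 : Module.finrank ℤ N = 1 := by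
      rw [← hNe.finrank_eq, Module.finrank_self]
    have h2 : Module.finrank ℤ N = n := by
      rw [Module.finrank_eq_card_basis snf.bN, Fintype.card_fin]
    omega
  subst hn1
  -- `1` is in `N`, so `1 = c • bN 0` for some `c`
  have h1N : (1 : T) ∈ N := Submodule.mem_span_singleton_self 1
  set x1 : N := ⟨1, h1N⟩ with hx1
  set c : ℤ := snf.bN.repr x1 0 with hc
  have hsum : c • (snf.bN 0 : T) = 1 := by
    have := snf.bN.sum_repr x1
    rw [Fin.sum_univ_one] at this
    have := congrArg (Subtype.val) this
    simpa [hc] using this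
  have hrel : (snf.bN 0 : T) = snf.a 0 • snf.bM (snf.f 0) := snf.snf 0
  have hkey : (c * snf.a 0) • snf.bM (snf.f 0) = 1 := by
    rw [mul_smul, ← hrel, hsum]
  have hunit : IsUnit (c * snf.a 0) := aux_isUnit_of_smul_eq_one T b _ _ hkey
  set u : ℤˣ := hunit.unit with hu
  have huval : (u : ℤ) = c * snf.a 0 := hunit.unit_spec
  -- build basis `d` with `d 0 = 1`
  set w : Fin 3 → ℤˣ := fun i => if i = snf.f 0 then u else 1 with hw
  set d : Module.Basis (Fin 3) ℤ T := (snf.bM.unitsSMul w).reindex (Equiv.swap (snf.f 0) 0) with hd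
  have hd0 : d 0 = 1 := by
    rw [hd, Module.Basis.reindex_apply, Equiv.symm_swap, Equiv.swap_apply_right,
      Module.Basis.unitsSMul_apply, hw]
    show (if snf.f 0 = snf.f 0 then u else 1) • snf.bM (snf.f 0) = 1
    rw [if_pos rfl, Units.smul_def, huval, hkey]
  -- Step 2: shear to make the product of the last two basis vectors an integer.
  set p : ℤ := d.repr (d 1 * d 2) 1 with hp
  set q : ℤ := d.repr (d 1 * d 2) 2 with hq
  set m : ℤ := d.repr (d 1 * d 2) 0 with hm
  have hprod : d 1 * d 2 = (m : T) + (p : T) * d 1 + (q : T) * d 2 := by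
    have := d.sum_repr (d 1 * d 2)
    rw [Fin.sum_univ_three, hd0] at this
    rw [← hp, ← hq, ← hm] at this
    rw [← this]
    push_cast [zsmul_eq_mul]
    ring
  -- the shear linear equivalence
  set s : T →ₗ[ℤ] T := q • ((d.coord 1).smulRight (1 : T)) + p • ((d.coord 2).smulRight (1 : T))
    with hs
  have hs_apply : ∀ x : T, s x = (q * d.repr x 1) • (1 : T) + (p * d.repr x 2) • (1 : T) := by
    intro x
    simp [hs, Module.Basis.coord_apply, mul_smul]
  have hrepr_one : ∀ (j : Fin 3), j ≠ 0 → d.repr (1 : T) j = 0 := by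
    intro j hj
    rw [← hd0, d.repr_self]
    simp [Finsupp.single_apply, (Ne.symm hj)]
  have hss : ∀ x : T, s (s x) = 0 := by
    intro x
    rw [hs_apply (s x), hs_apply x]
    have e1 : d.repr ((q * d.repr x 1) • (1 : T) + (p * d.repr x 2) • (1 : T)) 1 = 0 := by
      rw [map_add, map_smul, map_smul]
      simp [hrepr_one 1 (by decide)]
    have e2 : d.repr ((q * d.repr x 1) • (1 : T) + (p * d.repr x 2) • (1 : T)) 2 = 0 := by
      rw [map_add, map_smul, map_smul]
      simp [hrepr_one 2 (by decide)]
    rw [e1, e2]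
    simp
  set F : T →ₗ[ℤ] T := LinearMap.id - s with hF
  set G : T →ₗ[ℤ] T := LinearMap.id + s with hG
  have hFG : F.comp G = LinearMap.id := by
    ext x
    simp only [hF, hG, LinearMap.comp_apply, LinearMap.sub_apply, LinearMap.add_apply,
      LinearMap.id_apply, map_add, hss x]
    abel
  have hGF : G.comp F = LinearMap.id := by
    ext x
    simp only [hF, hG, LinearMap.comp_apply, LinearMap.sub_apply, LinearMap.add_apply,
      LinearMap.id_apply, map_sub, hss x]
    abel
  set e : T ≃ₗ[ℤ] T := LinearEquiv.ofLinear F G hFG hGF with he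
  refine ⟨d.map e, m + p * q, ?_, ?_⟩
  · rw [Module.Basis.map_apply]
    show F (d 0) = 1
    rw [hF, LinearMap.sub_apply, LinearMap.id_apply, hs_apply, hd0]
    rw [hrepr_one 1 (by decide), hrepr_one 2 (by decide)]
    simp
  · rw [Module.Basis.map_apply, Module.Basis.map_apply]
    show F (d 1) * F (d 2) = _
    have hF1 : F (d 1) = d 1 - (q : T) := by
      rw [hF, LinearMap.sub_apply, LinearMap.id_apply, hs_apply]
      rw [d.repr_self]
      simp [Finsupp.single_apply, zsmul_eq_mul]
    have hF2 : F (d 2) = d 2 - (p : T) := by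
      rw [hF, LinearMap.sub_apply, LinearMap.id_apply, hs_apply]
      rw [d.repr_self]
      simp [Finsupp.single_apply, zsmul_eq_mul]
    rw [hF1, hF2]
    push_cast
    linear_combination hprod
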